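/- Let (K, D) be a model of W_e-DCF, write ∂_m := D_{𝐞_m} for 1 ≤ m ≤ e, set F_m := ⋂_{j=m}^{e} ker ∂_j for 1 ≤ m ≤ e and F_{e+1} := K. Suppose x_1,…,x_e ∈ K satisfy x_m ∈ F_{m+1} and ∂_m(x_m) = 1 for every 1 ≤ m ≤ e. Then (∂_1)^(p^e − 1)(x_1^{p−1}·x_2^{p−1}···x_e^{p−1}) = ((p−1)!)^e · 1_K, and this element is nonzero. -/

import Mathlib

noncomputable section

open scoped BigOperators

/-- The `m`-th Witt addition polynomial with coefficients reduced mod `p`. -/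
def wittHmod (p : ℕ) [Fact p.Prime] (m : ℕ) : MvPolynomial (Fin 2 × ℕ) (ZMod p) :=
  MvPolynomial.map (Int.castRingHom (ZMod p)) (WittVector.wittAdd p m)

/-- The exponent (as a finitely supported function) of the monomial `X̄^i * Ȳ^j`,
where `X_{m+1}` is the variable `(0, m)` and `Y_{m+1}` is the variable `(1, m)`. -/
def xyExp (e : ℕ) (i j : Fin e → ℕ) : (Fin 2 × ℕ) →₀ ℕ :=
  ∑ m : Fin e, (Finsupp.single ((0 : Fin 2), (m : ℕ)) (i m) +
    Finsupp.single ((1 : Fin 2), (m : ℕ)) (j m))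

/-- `wittAlpha p e i j l` is the coefficient `α_{i,j}(l) ∈ 𝔽_p` of the monomial `X̄^i * Ȳ^j` in
`H_1^{l_1} ⋯ H_e^{l_e}`, where `H_1, …, H_e` are the polynomials giving the group law of the
`e`-dimensional Witt group over `𝔽_p`. -/
def wittAlpha (p : ℕ) [Fact p.Prime] (e : ℕ) (i j l : Fin e → ℕ) : ZMod p :=
  MvPolynomial.coeff (xyExp e i j) (∏ m : Fin e, (wittHmod p (m : ℕ)) ^ (l m))

/-- `(K, D)` is a model of `W_e`-DCF:  `K` is a separably closed field of characteristic `p` with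
`[K : K^p] = p^e` (where `K^p` is the subfield of `p`-th powers, i.e. the range of the Frobenius)
and `D` is a strict `W_e`-iterative Hasse–Schmidt derivation of dimension `e`.  Multi-indices
`𝐢 ∈ ℕ^e` are represented as functions `Fin e → ℕ`, and the scalars `α_{𝐢,𝐣}(𝐥) ∈ 𝔽_p` act on `K`
via `ZMod.cast` (the iterated sum of `1`). -/
def IsWeDCF (p e : ℕ) [Fact p.Prime] (K : Type*) [Field K] [CharP K p]
    (D : (Fin e → ℕ) → K → K) : Prop :=
  IsSepClosed K ∧
  Module.finrank ↥(RingHom.fieldRange (frobenius K p)) K = p ^ e ∧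
  D 0 = id ∧
  (∀ i : Fin e → ℕ, ∀ x y : K, D i (x + y) = D i x + D i y) ∧
  (∀ i : Fin e → ℕ, ∀ x y : K, D i (x * y) =
     ∑ k ∈ Finset.Iic i, D k x * D (i - k) y) ∧
  (∀ i j : Fin e → ℕ, ∀ x : K,
     D i (D j x) = ∑ᶠ l : Fin e → ℕ, ZMod.cast (wittAlpha p e i j l) * D l x) ∧
  (∀ x : K, (∀ m : Fin e, D (Pi.single m 1) x = 0) ↔ ∃ y : K, x = y ^ p)


open MvPolynomial Finset

namespace WeDCFAux

variable {σ : Type*} {R : Type*} [CommRing R]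

/-- If a variable occurs in the monomial `d` but not among the variables of `φ`,
then the coefficient of `d` in `φ` vanishes. -/
lemma coeff_eq_zero_of_mem_support_not_var {φ : MvPolynomial σ R} {d : σ →₀ ℕ} {x : σ}
    (hx : x ∈ d.support) (hv : x ∉ φ.vars) : MvPolynomial.coeff d φ = 0 := by
  by_contra hc
  exact hv ((mem_vars x).mpr ⟨d, MvPolynomial.mem_support_iff.mpr hc, hx⟩)

/-- If `φ` has zero constant term and none of its variables occurs in `d`, then the
coefficient of `d` in `φ * ψ` vanishes. -/
lemma coeff_mul_eq_zero_left {φ ψ : MvPolynomial σ R} {d : σ →₀ ℕ}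
    (h0 : constantCoeff φ = 0) (hv : ∀ x ∈ φ.vars, d x = 0) :
    MvPolynomial.coeff d (φ * ψ) = 0 := by
  classical
  rw [coeff_mul]
  apply Finset.sum_eq_zero
  rintro ⟨d1, d2⟩ hmem
  rw [Finset.HasAntidiagonal.mem_antidiagonal] at hmem
  by_cases h1 : d1 = 0
  · subst h1
    rw [show MvPolynomial.coeff 0 φ = 0 from h0, zero_mul]
  · suffices h : MvPolynomial.coeff d1 φ = 0 by rw [h, zero_mul]
    by_contra hc
    obtain ⟨x, hx⟩ : ∃ x, d1 x ≠ 0 := by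
      by_contra hall
      push_neg at hall
      exact h1 (Finsupp.ext hall)
    have hxv : x ∈ φ.vars :=
      (mem_vars x).mpr ⟨d1, MvPolynomial.mem_support_iff.mpr hc, Finsupp.mem_support_iff.mpr hx⟩
    have : d1 x + d2 x = d x := by rw [← hmem]; rfl
    have := hv x hxv
    omega

lemma pow_coeff_conditions {R' : MvPolynomial σ R} {a b : σ}
    (hR : ∀ d, MvPolynomial.coeff d R' ≠ 0 → d a = 0 ∧ d b = 0 ∧ d ≠ 0) :
    ∀ n, 1 ≤ n → ∀ d, MvPolynomial.coeff d (R' ^ n) ≠ 0 → d a = 0 ∧ d b = 0 ∧ d ≠ 0 := by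
  intro n
  induction n with
  | zero => omega
  | succ n ih =>
    intro _ d hd
    rcases Nat.eq_or_lt_of_le (Nat.one_le_iff_ne_zero.mpr (Nat.succ_ne_zero n)) with h | h
    · rcases n with _ | n
      · rw [pow_one] at hd; exact hR d hd
      · omega
    · rcases Nat.eq_zero_or_pos n with rfl | hn
      · rw [pow_one] at hd; exact hR d hd
      · rw [pow_succ'] at hd
        classical
        rw [coeff_mul] at hd
        obtain ⟨⟨d1, d2⟩, hmem, hne⟩ := Finset.exists_ne_zero_of_sum_ne_zero hd
        rw [Finset.HasAntidiagonal.mem_antidiagonal] at hmem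
        have h1 : MvPolynomial.coeff d1 R' ≠ 0 := fun h => hne (by rw [h, zero_mul])
        have h2 : MvPolynomial.coeff d2 (R' ^ n) ≠ 0 := fun h => hne (by rw [h, mul_zero])
        obtain ⟨ha1, hb1, hne1⟩ := hR d1 h1
        obtain ⟨ha2, hb2, _⟩ := ih hn d2 h2
        subst hmem
        refine ⟨by simp [ha1, ha2], by simp [hb1, hb2], ?_⟩
        intro h
        apply hne1
        ext x
        have := DFunLike.congr_fun h x
        simp only [Finsupp.add_apply, Finsupp.coe_zero, Pi.zero_apply] at this
        simp only [Finsupp.coe_zero, Pi.zero_apply]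
        omega

/-- Coefficient of `X a ^ i * X b ^ j` in `(X a + X b + R)^(i+j)`, when every monomial of `R`
avoids `a, b` and is nonconstant. -/
lemma coeff_add_add_pow {a b : σ} (hab : a ≠ b) {R' : MvPolynomial σ R}
    (hR : ∀ d, MvPolynomial.coeff d R' ≠ 0 → d a = 0 ∧ d b = 0 ∧ d ≠ 0) (i j : ℕ) :
    MvPolynomial.coeff (Finsupp.single a i + Finsupp.single b j)
      ((X a + X b + R') ^ (i + j)) = ((i + j).choose i : R) := by
  classical
  set n := i + j with hn
  set d : σ →₀ ℕ := Finsupp.single a i + Finsupp.single b j with hd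
  have hda : d a = i := by
    rw [hd]; simp [Finsupp.single_apply, Ne.symm hab]
  have hsupp : ∀ x, d x ≠ 0 → x = a ∨ x = b := by
    intro x hx
    rw [hd] at hx
    simp only [Finsupp.add_apply, Finsupp.single_apply] at hx
    by_contra h
    push_neg at h
    simp [Ne.symm h.1, Ne.symm h.2] at hx
  have hXpow : ∀ k l : ℕ, (X a ^ k * X b ^ l : MvPolynomial σ R)
      = monomial (Finsupp.single a k + Finsupp.single b l) 1 := by
    intro k l
    rw [X_pow_eq_monomial, X_pow_eq_monomial, monomial_mul, one_mul]
  have hA : MvPolynomial.coeff d ((X a + X b : MvPolynomial σ R) ^ n) = (n.choose i : R) := by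
    rw [add_pow, MvPolynomial.coeff_sum]
    rw [Finset.sum_eq_single i]
    · rw [← MvPolynomial.C_eq_coe_nat, mul_comm _ (MvPolynomial.C _), MvPolynomial.coeff_C_mul, hXpow]
      have : Finsupp.single a i + Finsupp.single b (n - i) = d := by
        rw [hd, hn]; congr 1; congr 1; omega
      rw [this, MvPolynomial.coeff_monomial, if_pos rfl, mul_one]
    · intro k _ hki
      rw [← MvPolynomial.C_eq_coe_nat, mul_comm _ (MvPolynomial.C _), MvPolynomial.coeff_C_mul, hXpow,
        MvPolynomial.coeff_monomial, if_neg, mul_zero]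
      intro h
      apply hki
      have h2 := DFunLike.congr_fun h a
      rw [hda] at h2
      simp [Finsupp.single_apply, Ne.symm hab] at h2
      omega
    · intro hni
      exact absurd (Finset.mem_range.mpr (by omega : i < n + 1)) hni
  rw [add_pow, MvPolynomial.coeff_sum]
  rw [Finset.sum_eq_single n]
  · rw [Nat.sub_self, pow_zero, mul_one, Nat.choose_self, Nat.cast_one, mul_one]
    exact hA
  · intro k hk hkn
    rw [← MvPolynomial.C_eq_coe_nat, mul_comm _ (MvPolynomial.C _), MvPolynomial.coeff_C_mul]
    have hnk : 1 ≤ n - k := by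
      rw [Finset.mem_range] at hk; omega
    have : MvPolynomial.coeff d ((X a + X b : MvPolynomial σ R) ^ k * R' ^ (n - k)) = 0 := by
      rw [MvPolynomial.coeff_mul]
      apply Finset.sum_eq_zero
      rintro ⟨d1, d2⟩ hmem
      rw [Finset.HasAntidiagonal.mem_antidiagonal] at hmem
      by_cases h2 : MvPolynomial.coeff d2 (R' ^ (n - k)) = 0
      · rw [h2, mul_zero]
      · exfalso
        obtain ⟨h2a, h2b, h2ne⟩ := pow_coeff_conditions hR (n - k) hnk d2 h2
        apply h2ne
        ext x
        simp only [Finsupp.coe_zero, Pi.zero_apply]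
        have hle : d1 x + d2 x = d x := by rw [← hmem]; rfl
        rcases em (x = a) with rfl | hxa
        · exact h2a
        rcases em (x = b) with rfl | hxb
        · exact h2b
        have : d x = 0 := by
          by_contra h
          rcases hsupp x h with h | h
          exacts [hxa h, hxb h]
        omega
    rw [this, mul_zero]
  · intro hni
    exact absurd (Finset.self_mem_range_succ n) hni

section Witt

open WittVector

variable (p : ℕ) [hp : Fact p.Prime]

/-- The weight function on the variables of Witt addition polynomials. -/
def wt : Fin 2 × ℕ → ℕ := fun v => p ^ v.2

variable {σ' : Type*}

lemma wh_pow {w : σ' → ℕ} {φ : MvPolynomial σ' R} {m : ℕ}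
    (h : MvPolynomial.IsWeightedHomogeneous w φ m) (k : ℕ) :
    MvPolynomial.IsWeightedHomogeneous w (φ ^ k) (k * m) := by
  induction k with
  | zero => rw [pow_zero, Nat.zero_mul]; exact MvPolynomial.isWeightedHomogeneous_one R w
  | succ k ih => rw [pow_succ, Nat.succ_mul]; exact ih.mul h

lemma wh_neg {w : σ' → ℕ} {φ : MvPolynomial σ' R} {m : ℕ}
    (h : MvPolynomial.IsWeightedHomogeneous w φ m) :
    MvPolynomial.IsWeightedHomogeneous w (-φ) m := fun d hd =>
  h (by rwa [MvPolynomial.coeff_neg, neg_ne_zero] at hd)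

lemma wh_sub {w : σ' → ℕ} {φ ψ : MvPolynomial σ' R} {m : ℕ}
    (h1 : MvPolynomial.IsWeightedHomogeneous w φ m)
    (h2 : MvPolynomial.IsWeightedHomogeneous w ψ m) :
    MvPolynomial.IsWeightedHomogeneous w (φ - ψ) m := by
  rw [sub_eq_add_neg]; exact h1.add (wh_neg h2)

/-- The ghost component identity for the Witt addition polynomials over `ℤ`. -/
lemma ghost_add (n : ℕ) :
    ∑ i ∈ Finset.range (n + 1),
      MvPolynomial.C ((p : ℤ) ^ i) * (wittAdd p i) ^ (p ^ (n - i)) =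
    MvPolynomial.rename (Prod.mk (0 : Fin 2)) (wittPolynomial p ℤ n) +
      MvPolynomial.rename (Prod.mk (1 : Fin 2)) (wittPolynomial p ℤ n) := by
  have h := wittStructureInt_prop p (MvPolynomial.X (0 : Fin 2) + MvPolynomial.X 1) n
  rw [map_add, MvPolynomial.bind₁_X_right, MvPolynomial.bind₁_X_right] at h
  rw [← h]
  show _ = MvPolynomial.aeval (wittStructureInt p (MvPolynomial.X 0 + MvPolynomial.X 1))
      (wittPolynomial p ℤ n)
  rw [aeval_wittPolynomial]
  apply Finset.sum_congr rfl
  intro i _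
  rw [show ((p : MvPolynomial (Fin 2 × ℕ) ℤ) ^ i) = MvPolynomial.C ((p : ℤ) ^ i) by
    rw [map_pow, MvPolynomial.C_eq_coe_nat]]
  rfl

lemma rename_wittPolynomial_isWH (b : Fin 2) (n : ℕ) :
    MvPolynomial.IsWeightedHomogeneous (wt p)
      (MvPolynomial.rename (Prod.mk b) (wittPolynomial p ℤ n)) (p ^ n) := by
  rw [wittPolynomial, map_sum]
  apply MvPolynomial.IsWeightedHomogeneous.sum
  intro i hi
  rw [MvPolynomial.rename_monomial]
  apply MvPolynomial.isWeightedHomogeneous_monomial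
  rw [Finsupp.mapDomain_single, Finsupp.weight_apply, Finsupp.sum_single_index]
  · show p ^ (n - i) • (p ^ i) = p ^ n
    rw [smul_eq_mul, ← pow_add]
    congr 1
    rw [Finset.mem_range] at hi
    omega
  · exact zero_smul _ _

lemma wittAdd_isWH (n : ℕ) :
    MvPolynomial.IsWeightedHomogeneous (wt p) (wittAdd p n) (p ^ n) := by
  induction n using Nat.strong_induction_on with
  | _ n ih =>
    have key := ghost_add p n
    rw [Finset.sum_range_succ, Nat.sub_self, pow_zero, pow_one] at key
    have hAn : MvPolynomial.C ((p : ℤ) ^ n) * wittAdd p n =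
        (MvPolynomial.rename (Prod.mk (0 : Fin 2)) (wittPolynomial p ℤ n) +
          MvPolynomial.rename (Prod.mk (1 : Fin 2)) (wittPolynomial p ℤ n)) -
        ∑ i ∈ Finset.range n, MvPolynomial.C ((p : ℤ) ^ i) * (wittAdd p i) ^ (p ^ (n - i)) := by
      rw [← key]; ring
    have hH : MvPolynomial.IsWeightedHomogeneous (wt p)
        (MvPolynomial.C ((p : ℤ) ^ n) * wittAdd p n) (p ^ n) := by
      rw [hAn]
      apply wh_sub
      · exact (rename_wittPolynomial_isWH p 0 n).add (rename_wittPolynomial_isWH p 1 n)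
      · apply MvPolynomial.IsWeightedHomogeneous.sum
        intro i hi
        rw [Finset.mem_range] at hi
        have h1 : MvPolynomial.IsWeightedHomogeneous (wt p)
            ((wittAdd p i) ^ (p ^ (n - i))) (p ^ (n - i) * p ^ i) :=
          wh_pow (ih i hi) _
        rw [← pow_add, show n - i + i = n by omega] at h1
        have h0 := (MvPolynomial.isWeightedHomogeneous_C (wt p) ((p : ℤ) ^ i)).mul h1
        rwa [zero_add] at h0
    intro d hd
    refine hH ?_
    rw [MvPolynomial.coeff_C_mul]
    exact mul_ne_zero (pow_ne_zero _ (by exact_mod_cast hp.out.ne_zero)) hd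

end Witt


section Witt2

open WittVector

variable (p : ℕ) [hp : Fact p.Prime]

lemma wittAdd_top_shape (n : ℕ) {d : Fin 2 × ℕ →₀ ℕ} (b : Fin 2)
    (hd : MvPolynomial.coeff d (wittAdd p n) ≠ 0) (hb : d (b, n) ≠ 0) :
    d = Finsupp.single (b, n) 1 := by
  have hw := wittAdd_isWH p n hd
  rw [Finsupp.weight_apply, Finsupp.sum] at hw
  have hppos : 0 < p ^ n := pow_pos hp.out.pos n
  have hmem : (b, n) ∈ d.support := Finsupp.mem_support_iff.mpr hb
  have h1 : d (b, n) • wt p (b, n) ≤ p ^ n := by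
    rw [← hw]
    exact Finset.single_le_sum (f := fun x => d x • wt p x) (fun i _ => Nat.zero_le _) hmem
  have hwt : wt p (b, n) = p ^ n := rfl
  rw [hwt, smul_eq_mul] at h1
  have hb1 : d (b, n) = 1 := by nlinarith [Nat.one_le_iff_ne_zero.mpr hb]
  have hsplit := Finset.add_sum_erase d.support (fun x => d x • wt p x) hmem
  simp only [hw, hwt, hb1, one_smul] at hsplit
  have hrest : ∑ x ∈ d.support.erase (b, n), d x • wt p x = 0 := by omega
  have hsupp : d.support = {(b, n)} := by
    apply Finset.eq_singleton_iff_unique_mem.mpr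
    refine ⟨hmem, fun x hx => ?_⟩
    by_contra hne
    have hxe : x ∈ d.support.erase (b, n) := Finset.mem_erase.mpr ⟨hne, hx⟩
    have := (Finset.sum_eq_zero_iff.mp hrest) x hxe
    have hdx : d x ≠ 0 := Finsupp.mem_support_iff.mp hx
    have hwx : 0 < wt p x := pow_pos hp.out.pos _
    simp only [smul_eq_mul] at this
    exact absurd this (Nat.mul_ne_zero hdx (Nat.pos_iff_ne_zero.mp hwx))
  obtain ⟨-, hsingle⟩ := Finsupp.support_eq_singleton.mp hsupp
  rw [hsingle, hb1]

lemma constantCoeff_wittAdd' (n : ℕ) : MvPolynomial.coeff 0 (wittAdd p n) = 0 := by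
  by_contra h
  have := wittAdd_isWH p n h
  rw [map_zero] at this
  exact (pow_pos hp.out.pos n).ne' (by omega)

lemma rename_W_eq (b' : Fin 2) (n : ℕ) :
    MvPolynomial.rename (Prod.mk b') (wittPolynomial p ℤ n) =
      ∑ i ∈ Finset.range (n + 1),
        MvPolynomial.monomial (Finsupp.single (b', i) (p ^ (n - i))) ((p : ℤ) ^ i) := by
  rw [wittPolynomial, map_sum]
  refine Finset.sum_congr rfl fun i _ => ?_
  rw [MvPolynomial.rename_monomial, Finsupp.mapDomain_single]

lemma coeff_single_rename (n : ℕ) (b b' : Fin 2) :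
    MvPolynomial.coeff (Finsupp.single ((b : Fin 2), n) 1)
      (MvPolynomial.rename (Prod.mk b') (wittPolynomial p ℤ n)) =
      if b' = b then (p : ℤ) ^ n else 0 := by
  rw [rename_W_eq, MvPolynomial.coeff_sum]
  have hp1 : 1 < p := hp.out.one_lt
  by_cases hbb : b' = b
  · subst hbb
    rw [Finset.sum_eq_single n]
    · rw [Nat.sub_self, pow_zero, MvPolynomial.coeff_monomial, if_pos rfl, if_pos rfl]
    · intro i hi hin
      rw [MvPolynomial.coeff_monomial, if_neg]
      intro h
      rcases Finsupp.single_eq_single_iff _ _ _ _ |>.mp h with ⟨h1, -⟩ | ⟨h1, -⟩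
      · exact hin (congrArg Prod.snd h1)
      · exact absurd h1 (pow_ne_zero _ (by omega))
    · intro h
      exact absurd (Finset.mem_range.mpr (by omega : n < n + 1)) h
  · rw [if_neg hbb]
    apply Finset.sum_eq_zero
    intro i _
    rw [MvPolynomial.coeff_monomial, if_neg]
    intro h
    rcases Finsupp.single_eq_single_iff _ _ _ _ |>.mp h with ⟨h1, -⟩ | ⟨-, h1⟩
    · exact hbb (congrArg Prod.fst h1)
    · exact Nat.one_ne_zero h1

lemma notvar_wittAdd_pow (i k n : ℕ) (b : Fin 2) (hni : i < n) :
    ((b, n) : Fin 2 × ℕ) ∉ ((wittAdd p i) ^ k).vars := by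
  intro h
  have h2 := wittAdd_vars p i (MvPolynomial.vars_pow _ _ h)
  rw [Finset.mem_product, Finset.mem_range] at h2
  omega

lemma coeff_single_wittAdd (n : ℕ) (b : Fin 2) :
    MvPolynomial.coeff (Finsupp.single ((b : Fin 2), n) 1) (wittAdd p n) = 1 := by
  have key := congrArg (MvPolynomial.coeff (Finsupp.single ((b : Fin 2), n) 1)) (ghost_add p n)
  rw [MvPolynomial.coeff_sum, Finset.sum_range_succ, Nat.sub_self, pow_zero, pow_one,
    MvPolynomial.coeff_add, coeff_single_rename, coeff_single_rename] at key
  have hsmem : ((b : Fin 2), n) ∈ (Finsupp.single ((b : Fin 2), n) 1).support := by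
    rw [Finsupp.mem_support_iff, Finsupp.single_eq_same]; exact one_ne_zero
  have hzero : ∀ i ∈ Finset.range n,
      MvPolynomial.coeff (Finsupp.single ((b : Fin 2), n) 1)
        (MvPolynomial.C ((p : ℤ) ^ i) * (wittAdd p i) ^ (p ^ (n - i))) = 0 := by
    intro i hi
    rw [Finset.mem_range] at hi
    rw [MvPolynomial.coeff_C_mul,
      coeff_eq_zero_of_mem_support_not_var hsmem (notvar_wittAdd_pow p i _ n b hi), mul_zero]
  rw [Finset.sum_eq_zero hzero, zero_add, MvPolynomial.coeff_C_mul] at key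
  have hb0 : ¬ ((1 : Fin 2) = 0) := by decide
  have hb1 : ¬ ((0 : Fin 2) = 1) := by decide
  have hpn : ((p : ℤ) ^ n) ≠ 0 := pow_ne_zero _ (by exact_mod_cast hp.out.ne_zero)
  have hlt := b.isLt
  rcases (by omega : (b : ℕ) = 0 ∨ (b : ℕ) = 1) with hb | hb
  · have hb' : b = 0 := Fin.ext hb
    subst hb'
    rw [if_pos rfl, if_neg hb0, add_zero] at key
    exact mul_left_cancel₀ hpn (by rw [key, mul_one])
  · have hb' : b = 1 := Fin.ext hb
    subst hb'
    rw [if_pos rfl, if_neg hb1, zero_add] at key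
    exact mul_left_cancel₀ hpn (by rw [key, mul_one])

lemma wittAdd_decomp (n : ℕ) :
    ∃ R' : MvPolynomial (Fin 2 × ℕ) ℤ,
      wittAdd p n = MvPolynomial.X ((0 : Fin 2), n) + MvPolynomial.X ((1 : Fin 2), n) + R' ∧
      ∀ d, MvPolynomial.coeff d R' ≠ 0 →
        d ((0 : Fin 2), n) = 0 ∧ d ((1 : Fin 2), n) = 0 ∧ d ≠ 0 := by
  refine ⟨wittAdd p n - MvPolynomial.X ((0 : Fin 2), n) - MvPolynomial.X ((1 : Fin 2), n),
    by ring, ?_⟩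
  intro d hd
  have hco : ∀ b : Fin 2, MvPolynomial.coeff d (MvPolynomial.X ((b : Fin 2), n) :
      MvPolynomial (Fin 2 × ℕ) ℤ) = if Finsupp.single ((b : Fin 2), n) 1 = d then 1 else 0 := by
    intro b
    classical
    exact MvPolynomial.coeff_X' _ _
  rw [MvPolynomial.coeff_sub, MvPolynomial.coeff_sub, hco 0, hco 1] at hd
  by_cases h0 : Finsupp.single ((0 : Fin 2), n) 1 = d
  · exfalso
    have hne : Finsupp.single ((1 : Fin 2), n) 1 ≠ d := by
      rw [← h0]
      intro hh
      rcases Finsupp.single_eq_single_iff _ _ _ _ |>.mp hh with ⟨h1, -⟩ | ⟨h1, -⟩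
      · have h2 : (1 : Fin 2) = 0 := congrArg Prod.fst h1
        exact absurd h2 (by decide)
      · exact Nat.one_ne_zero h1
    rw [if_pos h0, if_neg hne, ← h0, coeff_single_wittAdd] at hd
    exact hd (by ring)
  by_cases h1 : Finsupp.single ((1 : Fin 2), n) 1 = d
  · exfalso
    rw [if_pos h1, if_neg h0, ← h1, coeff_single_wittAdd] at hd
    exact hd (by ring)
  rw [if_neg h0, if_neg h1, sub_zero, sub_zero] at hd
  refine ⟨?_, ?_, ?_⟩
  · by_contra hb
    exact h0 (wittAdd_top_shape p n 0 hd hb).symm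
  · by_contra hb
    exact h1 (wittAdd_top_shape p n 1 hd hb).symm
  · intro h
    rw [h] at hd
    exact hd (constantCoeff_wittAdd' p n)

lemma coeff_mixed_wittAdd (m : ℕ) :
    MvPolynomial.coeff
      (Finsupp.single ((0 : Fin 2), m) 1 + Finsupp.single ((1 : Fin 2), m) (p - 1))
      (wittAdd p (m + 1)) = -1 := by
  set d : Fin 2 × ℕ →₀ ℕ :=
    Finsupp.single ((0 : Fin 2), m) 1 + Finsupp.single ((1 : Fin 2), m) (p - 1) with hd
  have hp1 : 1 < p := hp.out.one_lt
  have hd0 : d ((0 : Fin 2), m) ≠ 0 := by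
    rw [hd]; simp [Finsupp.single_apply]
  have hd1 : d ((1 : Fin 2), m) ≠ 0 := by
    rw [hd]; simp [Finsupp.single_apply]; omega
  have key := congrArg (MvPolynomial.coeff d) (ghost_add p (m + 1))
  rw [MvPolynomial.coeff_sum, Finset.sum_range_succ, Finset.sum_range_succ] at key
  -- the two rename terms have coefficient 0 at d
  have hrhs : ∀ b' : Fin 2,
      MvPolynomial.coeff d (MvPolynomial.rename (Prod.mk b') (wittPolynomial p ℤ (m + 1))) = 0 := by
    intro b'
    have hbne : ∃ b : Fin 2, b ≠ b' ∧ d ((b : Fin 2), m) ≠ 0 := by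
      have hlt := b'.isLt
      rcases (by omega : (b' : ℕ) = 0 ∨ (b' : ℕ) = 1) with hb | hb
      · have hb' : b' = 0 := by rw [Fin.ext_iff]; simpa using hb
        exact ⟨1, by rw [hb']; decide, hd1⟩
      · have hb' : b' = 1 := by rw [Fin.ext_iff]; simpa using hb
        exact ⟨0, by rw [hb']; decide, hd0⟩
    obtain ⟨b, hb, hdb⟩ := hbne
    apply coeff_eq_zero_of_mem_support_not_var (x := ((b : Fin 2), m))
    · exact Finsupp.mem_support_iff.mpr hdb
    · intro hv
      have := MvPolynomial.vars_rename _ _ hv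
      rw [Finset.mem_image] at this
      obtain ⟨y, -, hy⟩ := this
      exact hb (congrArg Prod.fst hy).symm
  have hzero : ∀ i ∈ Finset.range m,
      MvPolynomial.coeff d
        (MvPolynomial.C ((p : ℤ) ^ i) * (wittAdd p i) ^ (p ^ (m + 1 - i))) = 0 := by
    intro i hi
    rw [Finset.mem_range] at hi
    rw [MvPolynomial.coeff_C_mul,
      coeff_eq_zero_of_mem_support_not_var (x := ((0 : Fin 2), m))
        (Finsupp.mem_support_iff.mpr hd0) (notvar_wittAdd_pow p i _ m 0 hi), mul_zero]
  rw [Finset.sum_eq_zero hzero, zero_add, MvPolynomial.coeff_add, hrhs, hrhs, add_zero] at key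
  -- middle term: coeff d ((wittAdd p m) ^ p)
  obtain ⟨R', hReq, hRcond⟩ := wittAdd_decomp p m
  have hmid : MvPolynomial.coeff d ((wittAdd p m) ^ (p ^ (m + 1 - m))) = (p : ℤ) := by
    have hexp : p ^ (m + 1 - m) = p := by
      rw [show m + 1 - m = 1 by omega, pow_one]
    rw [hexp, hReq, hd]
    have := coeff_add_add_pow (R := ℤ)
      (a := ((0 : Fin 2), m)) (b := ((1 : Fin 2), m)) (by simp) hRcond 1 (p - 1)
    rw [show 1 + (p - 1) = p by omega] at this
    rw [this, Nat.choose_one_right]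
  rw [MvPolynomial.coeff_C_mul, MvPolynomial.coeff_C_mul, hmid, Nat.sub_self, pow_zero,
    pow_one] at key
  have hpm : ((p : ℤ) ^ (m + 1)) ≠ 0 := pow_ne_zero _ (by exact_mod_cast hp.out.ne_zero)
  have hpow : (p : ℤ) ^ m * (p : ℤ) = (p : ℤ) ^ (m + 1) := by ring
  rw [hpow] at key
  have h2 : (p : ℤ) ^ (m + 1) * MvPolynomial.coeff d (wittAdd p (m + 1)) =
      (p : ℤ) ^ (m + 1) * (-1) := by linarith
  exact mul_left_cancel₀ hpm h2

end Witt2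

section Mod

variable (p : ℕ) [hp : Fact p.Prime]

lemma wittHmod_isWH (n : ℕ) :
    MvPolynomial.IsWeightedHomogeneous (wt p) (wittHmod p n) (p ^ n) := by
  intro d hd
  apply wittAdd_isWH p n
  rw [wittHmod, MvPolynomial.coeff_map] at hd
  exact fun h => hd (by rw [h]; exact map_zero _)

lemma wittHmod_constantCoeff (n : ℕ) : MvPolynomial.coeff 0 (wittHmod p n) = 0 := by
  rw [wittHmod, MvPolynomial.coeff_map, constantCoeff_wittAdd' p n, map_zero]

lemma wittHmod_vars (n : ℕ) :
    (wittHmod p n).vars ⊆ Finset.univ ×ˢ Finset.range (n + 1) := by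
  intro x hx
  exact WittVector.wittAdd_vars p n (MvPolynomial.vars_map _ _ hx)

lemma wittHmod_decomp (n : ℕ) :
    ∃ S : MvPolynomial (Fin 2 × ℕ) (ZMod p),
      wittHmod p n = MvPolynomial.X ((0 : Fin 2), n) + MvPolynomial.X ((1 : Fin 2), n) + S ∧
      ∀ d, MvPolynomial.coeff d S ≠ 0 →
        d ((0 : Fin 2), n) = 0 ∧ d ((1 : Fin 2), n) = 0 ∧ d ≠ 0 := by
  obtain ⟨R', hReq, hRc⟩ := wittAdd_decomp p n
  refine ⟨MvPolynomial.map (Int.castRingHom (ZMod p)) R', ?_, ?_⟩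
  · rw [wittHmod, hReq]
    rw [map_add, map_add, MvPolynomial.map_X, MvPolynomial.map_X]
  · intro d hd
    rw [MvPolynomial.coeff_map] at hd
    exact hRc d (fun h => hd (by rw [h]; exact map_zero _))

lemma weight_single_wt (b : Fin 2) (n a : ℕ) :
    Finsupp.weight (wt p) (Finsupp.single ((b : Fin 2), n) a) = a * p ^ n := by
  have h : Finsupp.weight (wt p) (Finsupp.single ((b : Fin 2), n) a)
      = a • wt p ((b : Fin 2), n) := by
    rw [Finsupp.weight_apply]
    exact Finsupp.sum_single_index (by simp)
  rw [h, smul_eq_mul]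
  rfl

lemma xyExp_single (e : ℕ) (m : Fin e) (a b : ℕ) :
    xyExp e (Pi.single m a) (Pi.single m b) =
      Finsupp.single ((0 : Fin 2), (m : ℕ)) a + Finsupp.single ((1 : Fin 2), (m : ℕ)) b := by
  rw [xyExp]
  rw [Finset.sum_eq_single m]
  · rw [Pi.single_eq_same, Pi.single_eq_same]
  · intro m' _ hm'
    rw [Pi.single_eq_of_ne hm', Pi.single_eq_of_ne hm', Finsupp.single_zero,
      Finsupp.single_zero, add_zero]
  · intro h
    exact absurd (Finset.mem_univ m) h

lemma prod_single_pow (e : ℕ) (m : Fin e) (c : ℕ) :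
    (∏ m' : Fin e, (wittHmod p (m' : ℕ)) ^ (Pi.single m c m')) = (wittHmod p (m : ℕ)) ^ c := by
  rw [Finset.prod_eq_single m]
  · rw [Pi.single_eq_same]
  · intro m' _ hm'
    rw [Pi.single_eq_of_ne hm', pow_zero]
  · intro h
    exact absurd (Finset.mem_univ m) h

lemma wittAlpha_single_val (e : ℕ) (m : Fin e) (k : ℕ) :
    wittAlpha p e (Pi.single m 1) (Pi.single m k) (Pi.single m (k + 1)) = ((k : ZMod p) + 1) := by
  rw [wittAlpha, xyExp_single, prod_single_pow]
  obtain ⟨S, hSeq, hSc⟩ := wittHmod_decomp p (m : ℕ)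
  rw [hSeq]
  have h := coeff_add_add_pow (R := ZMod p) (a := ((0 : Fin 2), (m : ℕ)))
    (b := ((1 : Fin 2), (m : ℕ))) (by simp) hSc 1 k
  rw [show 1 + k = k + 1 by omega] at h
  rw [h]
  rw [show (k+1).choose 1 = k + 1 from Nat.choose_one_right _]
  push_cast
  ring

lemma wittAlpha_next_val (e : ℕ) (m : Fin e) (hm : (m : ℕ) + 1 < e) :
    wittAlpha p e (Pi.single m 1) (Pi.single m (p - 1))
      (Pi.single (⟨(m : ℕ) + 1, hm⟩ : Fin e) 1) = -1 := by
  rw [wittAlpha, xyExp_single, prod_single_pow, pow_one]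
  show MvPolynomial.coeff _ (wittHmod p ((m : ℕ) + 1)) = -1
  rw [wittHmod, MvPolynomial.coeff_map, coeff_mixed_wittAdd p (m : ℕ)]
  simp

lemma wittAlpha_support (e : ℕ) (m : Fin e) (k : ℕ) (l : Fin e → ℕ)
    (hne : wittAlpha p e (Pi.single m 1) (Pi.single m k) l ≠ 0) :
    (∀ m' : Fin e, (m' : ℕ) < (m : ℕ) → l m' = 0) ∧
    (∑ m' : Fin e, l m' * p ^ (m' : ℕ)) = (k + 1) * p ^ (m : ℕ) := by
  rw [wittAlpha, xyExp_single] at hne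
  set d : Fin 2 × ℕ →₀ ℕ :=
    Finsupp.single ((0 : Fin 2), (m : ℕ)) 1 + Finsupp.single ((1 : Fin 2), (m : ℕ)) k with hd
  have hdx : ∀ x : Fin 2 × ℕ, x.2 ≠ (m : ℕ) → d x = 0 := by
    intro x hx
    rw [hd, Finsupp.add_apply, Finsupp.single_apply, Finsupp.single_apply,
      if_neg (fun h => hx (congrArg Prod.snd h).symm),
      if_neg (fun h => hx (congrArg Prod.snd h).symm), add_zero]
  constructor
  · intro m' hm' 
    by_contra hlm
    apply hne
    obtain ⟨c, hc⟩ := Nat.exists_eq_succ_of_ne_zero hlm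
    rw [← Finset.mul_prod_erase Finset.univ _ (Finset.mem_univ m'), hc, pow_succ', mul_assoc]
    apply coeff_mul_eq_zero_left (wittHmod_constantCoeff p (m' : ℕ))
    intro x hx
    apply hdx
    have := wittHmod_vars p (m' : ℕ) hx
    rw [Finset.mem_product, Finset.mem_range] at this
    omega
  · have hprod : MvPolynomial.IsWeightedHomogeneous (wt p)
        (∏ m' : Fin e, (wittHmod p (m' : ℕ)) ^ (l m'))
        (∑ m' : Fin e, l m' * p ^ (m' : ℕ)) := by
      apply MvPolynomial.IsWeightedHomogeneous.prod
      intro m' _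
      exact wh_pow (wittHmod_isWH p (m' : ℕ)) (l m')
    have hw := hprod hne
    rw [map_add, weight_single_wt, weight_single_wt] at hw
    rw [← hw]
    ring

lemma index_arith_lt (e : ℕ) (m : Fin e) (c : ℕ) (hc : 0 < c) (hcp : c < p) (l : Fin e → ℕ)
    (hlow : ∀ m' : Fin e, (m' : ℕ) < (m : ℕ) → l m' = 0)
    (hs : ∑ m' : Fin e, l m' * p ^ (m' : ℕ) = c * p ^ (m : ℕ)) :
    l = Pi.single m c := by
  have hp1 : 1 < p := hp.out.one_lt
  have hbound : ∀ m' : Fin e, l m' * p ^ (m' : ℕ) ≤ c * p ^ (m : ℕ) := by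
    intro m'
    rw [← hs]
    exact Finset.single_le_sum (f := fun m' => l m' * p ^ (m' : ℕ))
      (fun i _ => Nat.zero_le _) (Finset.mem_univ m')
  have hzero : ∀ m' : Fin e, m' ≠ m → l m' = 0 := by
    intro m' hm'
    rcases lt_trichotomy ((m' : ℕ)) ((m : ℕ)) with h | h | h
    · exact hlow m' h
    · exact absurd (Fin.ext h) hm'
    · by_contra hlm
      have h1 : p ^ ((m : ℕ) + 1) ≤ p ^ (m' : ℕ) := Nat.pow_le_pow_right (by omega) (by omega)
      have h2 : p ^ (m' : ℕ) ≤ l m' * p ^ (m' : ℕ) :=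
        Nat.le_mul_of_pos_left _ (Nat.pos_of_ne_zero hlm)
      have h3 : c * p ^ (m : ℕ) < p * p ^ (m : ℕ) := by
        have := pow_pos hp.out.pos (m : ℕ)
        exact Nat.mul_lt_mul_of_lt_of_le hcp (le_refl _) this
      rw [← pow_succ'] at h3
      have := hbound m'
      omega
  have hsum : l m * p ^ (m : ℕ) = c * p ^ (m : ℕ) := by
    rw [← hs, Finset.sum_eq_single m]
    · intro m' _ hm'
      rw [hzero m' hm', Nat.zero_mul]
    · intro h
      exact absurd (Finset.mem_univ m) h
  have hlm : l m = c := Nat.eq_of_mul_eq_mul_right (pow_pos hp.out.pos _) hsum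
  funext m'
  by_cases h : m' = m
  · subst h; rw [Pi.single_eq_same]; exact hlm
  · rw [Pi.single_eq_of_ne h]; exact hzero m' h

lemma index_arith_eq (e : ℕ) (m : Fin e) (l : Fin e → ℕ)
    (hlow : ∀ m' : Fin e, (m' : ℕ) < (m : ℕ) → l m' = 0)
    (hs : ∑ m' : Fin e, l m' * p ^ (m' : ℕ) = p * p ^ (m : ℕ)) :
    l = Pi.single m p ∨
      ∃ hm : (m : ℕ) + 1 < e, l = Pi.single (⟨(m : ℕ) + 1, hm⟩ : Fin e) 1 := by
  have hp1 : 1 < p := hp.out.one_lt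
  have hbound : ∀ m' : Fin e, l m' * p ^ (m' : ℕ) ≤ p * p ^ (m : ℕ) := by
    intro m'
    rw [← hs]
    exact Finset.single_le_sum (f := fun m' => l m' * p ^ (m' : ℕ))
      (fun i _ => Nat.zero_le _) (Finset.mem_univ m')
  have hzero2 : ∀ m' : Fin e, (m : ℕ) + 2 ≤ (m' : ℕ) → l m' = 0 := by
    intro m' h
    by_contra hlm
    have h1 : p ^ ((m : ℕ) + 2) ≤ p ^ (m' : ℕ) := Nat.pow_le_pow_right (by omega) h
    have h2 : p ^ (m' : ℕ) ≤ l m' * p ^ (m' : ℕ) :=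
      Nat.le_mul_of_pos_left _ (Nat.pos_of_ne_zero hlm)
    have h3 : p * p ^ (m : ℕ) < p ^ ((m : ℕ) + 2) := by
      rw [show (m : ℕ) + 2 = ((m : ℕ) + 1) + 1 by omega, pow_succ, pow_succ]
      nlinarith [Nat.mul_pos (pow_pos hp.out.pos (m : ℕ)) hp.out.pos, hp1]
    have := hbound m'
    omega
  by_cases hex : ∃ m1 : Fin e, (m1 : ℕ) = (m : ℕ) + 1 ∧ l m1 ≠ 0
  · obtain ⟨m1, hm1, hlm1⟩ := hex
    right
    have hmlt : (m : ℕ) + 1 < e := hm1 ▸ m1.isLt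
    refine ⟨hmlt, ?_⟩
    have hne : m ≠ m1 := by
      intro h
      rw [h] at hm1
      omega
    have hzero : ∀ m' : Fin e, m' ∉ ({m, m1} : Finset (Fin e)) → l m' = 0 := by
      intro m' hm'
      rw [Finset.mem_insert, Finset.mem_singleton] at hm'
      push_neg at hm'
      rcases lt_trichotomy ((m' : ℕ)) ((m : ℕ)) with h | h | h
      · exact hlow m' h
      · exact absurd (Fin.ext h) hm'.1
      · rcases Nat.lt_or_ge ((m' : ℕ)) ((m : ℕ) + 2) with h2 | h2
        · have : (m' : ℕ) = (m : ℕ) + 1 := by omega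
          exact absurd (Fin.ext (this.trans hm1.symm)) hm'.2
        · exact hzero2 m' h2
    have hsum2 : ∑ x ∈ ({m, m1} : Finset (Fin e)), l x * p ^ (x : ℕ) = p * p ^ (m : ℕ) := by
      rw [← hs]
      exact Finset.sum_subset (Finset.subset_univ _)
        (fun x _ hx => by rw [hzero x hx, Nat.zero_mul])
    rw [Finset.sum_pair hne, hm1, pow_succ, Nat.mul_comm p (p ^ (m : ℕ))] at hsum2
    have hppm : 0 < p ^ (m : ℕ) := pow_pos hp.out.pos _
    have hap : 0 < p ^ (m : ℕ) * p := Nat.mul_pos hppm hp.out.pos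
    have hl1 : l m1 = 1 := by
      by_contra hll
      have h2 : 2 ≤ l m1 := by
        have := Nat.one_le_iff_ne_zero.mpr hlm1
        omega
      have h3 : 2 * (p ^ (m : ℕ) * p) ≤ l m1 * (p ^ (m : ℕ) * p) :=
        Nat.mul_le_mul_right _ h2
      linarith [Nat.zero_le (l m * p ^ (m : ℕ))]
    rw [hl1, one_mul] at hsum2
    have hl00 : l m * p ^ (m : ℕ) = 0 := by
      nth_rewrite 2 [← Nat.zero_add (p ^ (m : ℕ) * p)] at hsum2
      exact Nat.add_right_cancel hsum2
    have hl0 : l m = 0 :=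
      (Nat.mul_eq_zero.mp hl00).resolve_right hppm.ne'
    have hmeq : (⟨(m : ℕ) + 1, hmlt⟩ : Fin e) = m1 := Fin.ext (by simpa using hm1.symm)
    rw [hmeq]
    funext m'
    by_cases h : m' = m1
    · subst h; rw [Pi.single_eq_same]; exact hl1
    · rw [Pi.single_eq_of_ne h]
      by_cases h2 : m' = m
      · subst h2; exact hl0
      · exact hzero m' (by
          rw [Finset.mem_insert, Finset.mem_singleton]
          push_neg
          exact ⟨h2, h⟩)
  · left
    push_neg at hex
    have hzero : ∀ m' : Fin e, m' ≠ m → l m' = 0 := by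
      intro m' hm'
      rcases lt_trichotomy ((m' : ℕ)) ((m : ℕ)) with h | h | h
      · exact hlow m' h
      · exact absurd (Fin.ext h) hm'
      · rcases Nat.lt_or_ge ((m' : ℕ)) ((m : ℕ) + 2) with h2 | h2
        · exact hex m' (by omega)
        · exact hzero2 m' h2
    have hsum : l m * p ^ (m : ℕ) = p * p ^ (m : ℕ) := by
      rw [← hs, Finset.sum_eq_single m]
      · intro m' _ hm'
        rw [hzero m' hm', Nat.zero_mul]
      · intro h
        exact absurd (Finset.mem_univ m) h
    have hlm : l m = p := Nat.eq_of_mul_eq_mul_right (pow_pos hp.out.pos _) hsum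
    funext m'
    by_cases h : m' = m
    · subst h; rw [Pi.single_eq_same]; exact hlm
    · rw [Pi.single_eq_of_ne h]; exact hzero m' h

lemma wittAlpha_eq_zero_of_ne (e : ℕ) (m : Fin e) (k : ℕ) (hk : k + 1 < p) (l : Fin e → ℕ)
    (hl : l ≠ Pi.single m (k + 1)) :
    wittAlpha p e (Pi.single m 1) (Pi.single m k) l = 0 := by
  by_contra h
  obtain ⟨hlow, hs⟩ := wittAlpha_support p e m k l h
  exact hl (index_arith_lt p e m (k + 1) (by omega) hk l hlow hs)

lemma wittAlpha_top_eq_zero (e : ℕ) (m : Fin e) (hm : (m : ℕ) + 1 < e) (l : Fin e → ℕ)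
    (hl : l ≠ Pi.single (⟨(m : ℕ) + 1, hm⟩ : Fin e) 1) :
    wittAlpha p e (Pi.single m 1) (Pi.single m (p - 1)) l = 0 := by
  have hp1 : 1 < p := hp.out.one_lt
  by_contra h
  obtain ⟨hlow, hs⟩ := wittAlpha_support p e m (p - 1) l h
  rw [show p - 1 + 1 = p by omega] at hs
  rcases index_arith_eq p e m l hlow hs with hl' | ⟨hm', hl'⟩
  · apply h
    rw [hl']
    have := wittAlpha_single_val p e m (p - 1)
    rw [show p - 1 + 1 = p by omega] at this
    rw [this]
    rw [show ((p - 1 : ℕ) : ZMod p) + 1 = ((p : ℕ) : ZMod p) by push_cast [Nat.cast_sub (by omega : 1 ≤ p)]; ring]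
    rw [ZMod.natCast_self]
  · exact hl hl'

end Mod

section Field

variable {p e : ℕ} [hp : Fact p.Prime] {K : Type*} [Field K] [CharP K p]
variable {D : (Fin e → ℕ) → K → K}

omit hp in
lemma Iic_single (m : Fin e) :
    Finset.Iic (Pi.single m 1 : Fin e → ℕ) = {0, Pi.single m 1} := by
  ext k
  rw [Finset.mem_Iic, Finset.mem_insert, Finset.mem_singleton]
  constructor
  · intro hk
    rw [Pi.le_def] at hk
    by_cases h : k m = 0
    · left
      funext j
      rcases eq_or_ne j m with rfl | hj
      · simpa using h
      · have := hk j
        rw [Pi.single_eq_of_ne hj] at this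
        simpa using this
    · right
      funext j
      rcases eq_or_ne j m with rfl | hj
      · have := hk j
        rw [Pi.single_eq_same] at this ⊢
        omega
      · have := hk j
        rw [Pi.single_eq_of_ne hj] at this ⊢
        simpa using this
  · rintro (rfl | rfl)
    · rw [Pi.le_def]
      intro j
      exact Nat.zero_le _
    · exact le_refl _

omit hp in
lemma single_ne_zero' (m : Fin e) : (Pi.single m 1 : Fin e → ℕ) ≠ 0 := by
  intro h
  have := congrFun h m
  rw [Pi.single_eq_same] at this
  simp at this

omit hp in
lemma deriv_mul
    (hid : D 0 = id)
    (hmul : ∀ i : Fin e → ℕ, ∀ x y : K, D i (x * y) =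
      ∑ k ∈ Finset.Iic i, D k x * D (i - k) y)
    (m : Fin e) (a b : K) :
    D (Pi.single m 1) (a * b) = a * D (Pi.single m 1) b + D (Pi.single m 1) a * b := by
  rw [hmul, Iic_single]
  have h0 : (0 : Fin e → ℕ) ∉ ({Pi.single m 1} : Finset (Fin e → ℕ)) := by
    rw [Finset.mem_singleton]
    exact fun h => single_ne_zero' m h.symm
  rw [Finset.sum_insert h0, Finset.sum_singleton, hid]
  have hsub0 : (Pi.single m 1 - 0 : Fin e → ℕ) = Pi.single m 1 := by
    funext j; simp
  have hsubs : (Pi.single m 1 - Pi.single m 1 : Fin e → ℕ) = 0 := by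
    funext j; simp
  rw [hsub0, hsubs, hid]
  simp

omit hp in
lemma deriv_one
    (hid : D 0 = id)
    (hmul : ∀ i : Fin e → ℕ, ∀ x y : K, D i (x * y) =
      ∑ k ∈ Finset.Iic i, D k x * D (i - k) y)
    (m : Fin e) : D (Pi.single m 1) (1 : K) = 0 := by
  have h := deriv_mul hid hmul m (1 : K) 1
  rw [mul_one, one_mul, mul_one] at h
  exact left_eq_add.mp h

omit hp in
lemma deriv_natCast
    (hid : D 0 = id)
    (hadd : ∀ i : Fin e → ℕ, ∀ x y : K, D i (x + y) = D i x + D i y)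
    (hmul : ∀ i : Fin e → ℕ, ∀ x y : K, D i (x * y) =
      ∑ k ∈ Finset.Iic i, D k x * D (i - k) y)
    (m : Fin e) (n : ℕ) : D (Pi.single m 1) ((n : K)) = 0 := by
  induction n with
  | zero =>
    have h := hadd (Pi.single m 1) (0 : K) 0
    rw [add_zero] at h
    simpa using h
  | succ n ih =>
    rw [Nat.cast_succ, hadd, ih, deriv_one hid hmul, add_zero]

omit hp in
lemma deriv_natCast_mul
    (hid : D 0 = id)
    (hadd : ∀ i : Fin e → ℕ, ∀ x y : K, D i (x + y) = D i x + D i y)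
    (hmul : ∀ i : Fin e → ℕ, ∀ x y : K, D i (x * y) =
      ∑ k ∈ Finset.Iic i, D k x * D (i - k) y)
    (m : Fin e) (n : ℕ) (y : K) :
    D (Pi.single m 1) ((n : K) * y) = (n : K) * D (Pi.single m 1) y := by
  rw [deriv_mul hid hmul, deriv_natCast hid hadd hmul, zero_mul, add_zero]

omit hp in
lemma deriv_pow_one
    (hid : D 0 = id)
    (hmul : ∀ i : Fin e → ℕ, ∀ x y : K, D i (x * y) =
      ∑ k ∈ Finset.Iic i, D k x * D (i - k) y)
    (m : Fin e) (z : K) (hz : D (Pi.single m 1) z = 1) (s : ℕ) :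
    D (Pi.single m 1) (z ^ (s + 1)) = (s + 1 : ℕ) * z ^ s := by
  induction s with
  | zero => rw [pow_one, pow_zero, hz]; norm_num
  | succ s ih =>
    rw [pow_succ, deriv_mul hid hmul, hz, mul_one, ih]
    push_cast
    ring

omit hp in
lemma deriv_pow_zero
    (hid : D 0 = id)
    (hmul : ∀ i : Fin e → ℕ, ∀ x y : K, D i (x * y) =
      ∑ k ∈ Finset.Iic i, D k x * D (i - k) y)
    (m : Fin e) (z : K) (hz : D (Pi.single m 1) z = 0) (s : ℕ) :
    D (Pi.single m 1) (z ^ s) = 0 := by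
  induction s with
  | zero => rw [pow_zero]; exact deriv_one hid hmul m
  | succ s ih =>
    rw [pow_succ, deriv_mul hid hmul, hz, ih, mul_zero, zero_mul, add_zero]

omit hp in
lemma iterate_natCast_mul
    (hid : D 0 = id)
    (hadd : ∀ i : Fin e → ℕ, ∀ x y : K, D i (x + y) = D i x + D i y)
    (hmul : ∀ i : Fin e → ℕ, ∀ x y : K, D i (x * y) =
      ∑ k ∈ Finset.Iic i, D k x * D (i - k) y)
    (m : Fin e) (n : ℕ) (c : ℕ) (y : K) :
    (D (Pi.single m 1))^[n] ((c : K) * y) = (c : K) * (D (Pi.single m 1))^[n] y := by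
  induction n with
  | zero => rfl
  | succ n ih =>
    rw [Function.iterate_succ_apply', ih, deriv_natCast_mul hid hadd hmul,
      Function.iterate_succ_apply']

omit hp in
lemma iterate_mul_left
    (hid : D 0 = id)
    (hmul : ∀ i : Fin e → ℕ, ∀ x y : K, D i (x * y) =
      ∑ k ∈ Finset.Iic i, D k x * D (i - k) y)
    (m : Fin e) (a : K) (ha : D (Pi.single m 1) a = 0) (n : ℕ) (b : K) :
    (D (Pi.single m 1))^[n] (a * b) = a * (D (Pi.single m 1))^[n] b := by
  induction n with
  | zero => rfl
  | succ n ih =>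
    rw [Function.iterate_succ_apply', ih, deriv_mul hid hmul, ha, zero_mul, add_zero,
      Function.iterate_succ_apply']

omit hp in
lemma iterate_pow_desc
    (hid : D 0 = id)
    (hadd : ∀ i : Fin e → ℕ, ∀ x y : K, D i (x + y) = D i x + D i y)
    (hmul : ∀ i : Fin e → ℕ, ∀ x y : K, D i (x * y) =
      ∑ k ∈ Finset.Iic i, D k x * D (i - k) y)
    (m : Fin e) (z : K) (hz : D (Pi.single m 1) z = 1) :
    ∀ j, j ≤ p - 1 →
      (D (Pi.single m 1))^[j] (z ^ (p - 1)) =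
        ((p - 1).descFactorial j : K) * z ^ (p - 1 - j) := by
  intro j
  induction j with
  | zero =>
    intro _
    rw [Function.iterate_zero_apply, Nat.descFactorial_zero, Nat.cast_one, one_mul, Nat.sub_zero]
  | succ j ih =>
    intro hj
    have hj' : j ≤ p - 1 := by omega
    rw [Function.iterate_succ_apply', ih hj', deriv_natCast_mul hid hadd hmul]
    have hs : p - 1 - j = (p - 1 - (j + 1)) + 1 := by omega
    rw [hs, deriv_pow_one hid hmul m z hz]
    rw [Nat.descFactorial_succ]
    push_cast [show p - 1 - (j + 1) + 1 = p - 1 - j by omega]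
    ring

/-- The homomorphism `ZMod p →+* K`. -/
def cstHom (p : ℕ) (K : Type*) [Field K] [CharP K p] : ZMod p →+* K :=
  ZMod.castHom dvd_rfl K

lemma cst_eq (z : ZMod p) : (ZMod.cast z : K) = cstHom p K z := rfl

/-- Composition of `∂_m` with `D_{k·e_m}`, for `k + 1 < p`. -/
lemma comp_step
    (hiter : ∀ i j : Fin e → ℕ, ∀ x : K,
      D i (D j x) = ∑ᶠ l : Fin e → ℕ, ZMod.cast (wittAlpha p e i j l) * D l x)
    (m : Fin e) (k : ℕ) (hk : k + 1 < p) (a : K) :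
    D (Pi.single m 1) (D (Pi.single m k) a) =
      ((k : K) + 1) * D (Pi.single m (k + 1)) a := by
  rw [hiter]
  rw [finsum_eq_single _ (Pi.single m (k + 1)) (fun l hl => by
    rw [wittAlpha_eq_zero_of_ne p e m k hk l hl]
    simp [ZMod.cast_zero])]
  rw [wittAlpha_single_val, cst_eq]
  rw [map_add, map_natCast, map_one]

lemma iterate_D_fact
    (hid : D 0 = id)
    (hadd : ∀ i : Fin e → ℕ, ∀ x y : K, D i (x + y) = D i x + D i y)
    (hmul : ∀ i : Fin e → ℕ, ∀ x y : K, D i (x * y) =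
      ∑ k ∈ Finset.Iic i, D k x * D (i - k) y)
    (hiter : ∀ i j : Fin e → ℕ, ∀ x : K,
      D i (D j x) = ∑ᶠ l : Fin e → ℕ, ZMod.cast (wittAlpha p e i j l) * D l x)
    (m : Fin e) :
    ∀ k, k ≤ p - 1 → ∀ a : K,
      (D (Pi.single m 1))^[k] a = (k.factorial : K) * D (Pi.single m k) a := by
  intro k
  induction k with
  | zero =>
    intro _ a
    rw [Function.iterate_zero_apply, Nat.factorial_zero, Nat.cast_one, one_mul]
    have h0 : (Pi.single m 0 : Fin e → ℕ) = 0 := by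
      funext j; simp
    rw [h0, hid]
    rfl
  | succ k ih =>
    intro hk a
    have hk' : k ≤ p - 1 := by omega
    have hkp : k + 1 < p := by
      have := hp.out.two_le
      omega
    rw [Function.iterate_succ_apply', ih hk' a, deriv_natCast_mul hid hadd hmul,
      comp_step hiter m k hkp a, Nat.factorial_succ]
    push_cast
    ring

/-- The crucial step: the `p`-th iterate of `∂_m` is `∂_{m+1}`. -/
lemma iterate_D_p
    (hid : D 0 = id)
    (hadd : ∀ i : Fin e → ℕ, ∀ x y : K, D i (x + y) = D i x + D i y)
    (hmul : ∀ i : Fin e → ℕ, ∀ x y : K, D i (x * y) =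
      ∑ k ∈ Finset.Iic i, D k x * D (i - k) y)
    (hiter : ∀ i j : Fin e → ℕ, ∀ x : K,
      D i (D j x) = ∑ᶠ l : Fin e → ℕ, ZMod.cast (wittAlpha p e i j l) * D l x)
    (m : Fin e) (hm : (m : ℕ) + 1 < e) (a : K) :
    (D (Pi.single m 1))^[p] a = D (Pi.single (⟨(m : ℕ) + 1, hm⟩ : Fin e) 1) a := by
  have hp2 := hp.out.two_le
  have hsplit : p = (p - 1) + 1 := by omega
  rw [hsplit, Function.iterate_succ_apply',
    iterate_D_fact hid hadd hmul hiter m (p - 1) (le_refl _) a,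
    deriv_natCast_mul hid hadd hmul]
  rw [hiter]
  rw [finsum_eq_single _ (Pi.single (⟨(m : ℕ) + 1, hm⟩ : Fin e) 1) (fun l hl => by
    rw [wittAlpha_top_eq_zero p e m hm l hl]
    simp [ZMod.cast_zero])]
  rw [wittAlpha_next_val p e m hm, cst_eq, ← mul_assoc]
  have hfact : ((p - 1).factorial : K) * (cstHom p K) (-1) = 1 := by
    have h1 : ((p - 1).factorial : K) = cstHom p K (((p - 1).factorial : ℕ) : ZMod p) := by
      rw [map_natCast]
    rw [h1, ← map_mul, ZMod.wilsons_lemma]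
    norm_num
  rw [hfact, one_mul]

lemma iterate_base
    (hid : D 0 = id)
    (hadd : ∀ i : Fin e → ℕ, ∀ x y : K, D i (x + y) = D i x + D i y)
    (hmul : ∀ i : Fin e → ℕ, ∀ x y : K, D i (x * y) =
      ∑ k ∈ Finset.Iic i, D k x * D (i - k) y)
    (hiter : ∀ i j : Fin e → ℕ, ∀ x : K,
      D i (D j x) = ∑ᶠ l : Fin e → ℕ, ZMod.cast (wittAlpha p e i j l) * D l x)
    (he : 0 < e) :
    ∀ m : ℕ, ∀ hm : m < e, ∀ a : K,
      (D (Pi.single (⟨0, he⟩ : Fin e) 1))^[p ^ m] a = D (Pi.single (⟨m, hm⟩ : Fin e) 1) a := by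
  intro m
  induction m with
  | zero =>
    intro hm a
    rw [pow_zero, Function.iterate_one]
  | succ m ih =>
    intro hm a
    have hm' : m < e := by omega
    rw [pow_succ, Function.iterate_mul]
    have hfun : (D (Pi.single (⟨0, he⟩ : Fin e) 1))^[p ^ m] =
        D (Pi.single (⟨m, hm'⟩ : Fin e) 1) := funext (ih hm')
    rw [hfun]
    exact iterate_D_p hid hadd hmul hiter (⟨m, hm'⟩ : Fin e) hm a

end Field

end WeDCFAux

/-- In a model of `W_e`-DCF, writing `∂_m := D_{𝐞_m}` (`0`-indexed as `m : Fin e`), if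
`x_m` lies in `F_{m+1} = ⋂_{j > m} ker ∂_j` and `∂_m(x_m) = 1` for every `m`, then
`(∂_1)^(p^e − 1)(x_1^{p−1} ⋯ x_e^{p−1}) = ((p−1)!)^e`, which is nonzero. -/
theorem WeDCF_iterate_on_product (p e : ℕ) [Fact p.Prime] (he : 1 ≤ e)
    (K : Type*) [Field K] [CharP K p] (D : (Fin e → ℕ) → K → K)
    (hD : IsWeDCF p e K D) (x : Fin e → K)
    (hmem : ∀ m j : Fin e, m < j → D (Pi.single j 1) (x m) = 0)
    (hone : ∀ m : Fin e, D (Pi.single m 1) (x m) = 1) :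
    (D (Pi.single (⟨0, he⟩ : Fin e) 1))^[p ^ e - 1] (∏ m : Fin e, x m ^ (p - 1)) =
      ((Nat.factorial (p - 1) : K)) ^ e ∧
    ((Nat.factorial (p - 1) : K)) ^ e ≠ 0 := by
  obtain ⟨-, -, hid, hadd, hmul, hiter, -⟩ := hD
  have hp2 : 2 ≤ p := (Fact.out : p.Prime).two_le
  have hfact_ne : ((Nat.factorial (p - 1) : K)) ≠ 0 := by
    intro h
    have hdvd := (CharP.cast_eq_zero_iff K p _).mp h
    have := (Nat.Prime.dvd_factorial (Fact.out : p.Prime)).mp hdvd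
    omega
  have hne : ((Nat.factorial (p - 1) : K)) ^ e ≠ 0 := pow_ne_zero _ hfact_ne
  refine ⟨?_, hne⟩
  have main : ∀ k : ℕ, k ≤ e →
      (D (Pi.single (⟨0, he⟩ : Fin e) 1))^[p ^ k - 1]
        (∏ m ∈ Finset.univ.filter (fun m : Fin e => (m : ℕ) < k), x m ^ (p - 1)) =
      ((Nat.factorial (p - 1) : K)) ^ k := by
    intro k
    induction k with
    | zero =>
      intro _
      rw [show Finset.univ.filter (fun m : Fin e => (m : ℕ) < 0) = ∅ from
        Finset.filter_false_of_mem (fun m _ => by omega)]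
      simp
    | succ k ih =>
      intro hk1
      have hk : k < e := by omega
      have hsplit : p ^ (k + 1) - 1 = (p ^ k - 1) + p ^ k * (p - 1) := by
        have h1 : 1 ≤ p ^ k := Nat.one_le_pow _ _ (by omega)
        have h2 : p ^ k * (p - 1) = p ^ (k + 1) - p ^ k := by
          rw [Nat.mul_sub, Nat.mul_one, ← pow_succ]
        have h3 : p ^ k ≤ p ^ (k + 1) := Nat.pow_le_pow_right (by omega) (by omega)
        omega
      rw [hsplit, Function.iterate_add_apply, Function.iterate_mul]
      have hfun : ((D (Pi.single (⟨0, he⟩ : Fin e) 1))^[p ^ k]) =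
          D (Pi.single (⟨k, hk⟩ : Fin e) 1) :=
        funext (WeDCFAux.iterate_base hid hadd hmul hiter he k hk)
      rw [hfun]
      have hfilter : Finset.univ.filter (fun m : Fin e => (m : ℕ) < k + 1) =
          insert (⟨k, hk⟩ : Fin e) (Finset.univ.filter (fun m : Fin e => (m : ℕ) < k)) := by
        ext m'
        simp only [Finset.mem_filter, Finset.mem_insert, Finset.mem_univ, true_and]
        constructor
        · intro h
          rcases Nat.lt_or_ge ((m' : ℕ)) k with h2 | h2
          · right; exact h2
          · left; exact Fin.ext (show (m' : ℕ) = k by omega)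
        · rintro (rfl | h)
          · exact Nat.lt_succ_self k
          · omega
      have hnotmem : (⟨k, hk⟩ : Fin e) ∉
          Finset.univ.filter (fun m : Fin e => (m : ℕ) < k) := by
        simp
      rw [hfilter, Finset.prod_insert hnotmem]
      set A := ∏ m ∈ Finset.univ.filter (fun m : Fin e => (m : ℕ) < k), x m ^ (p - 1) with hA
      set z := x (⟨k, hk⟩ : Fin e) with hz
      have hA0 : D (Pi.single (⟨k, hk⟩ : Fin e) 1) A = 0 := by
        rw [hA]
        apply Finset.prod_induction _ (fun y => D (Pi.single (⟨k, hk⟩ : Fin e) 1) y = 0)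
        · intro a b ha hb
          rw [WeDCFAux.deriv_mul hid hmul, ha, hb, mul_zero, zero_mul, add_zero]
        · exact WeDCFAux.deriv_one hid hmul _
        · intro m' hm'
          rw [Finset.mem_filter] at hm'
          apply WeDCFAux.deriv_pow_zero hid hmul
          exact hmem m' (⟨k, hk⟩ : Fin e) (by rw [Fin.lt_def]; exact hm'.2)
      rw [mul_comm (z ^ (p - 1)) A]
      rw [WeDCFAux.iterate_mul_left hid hmul _ A hA0]
      rw [WeDCFAux.iterate_pow_desc hid hadd hmul _ z (hone _) (p - 1) (le_refl _)]
      rw [Nat.descFactorial_self, Nat.sub_self, pow_zero, mul_one]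
      rw [mul_comm A ((Nat.factorial (p - 1) : K))]
      rw [WeDCFAux.iterate_natCast_mul hid hadd hmul]
      rw [ih (by omega)]
      rw [pow_succ]
      ring
  have hfinal := main e (le_refl e)
  have huniv : Finset.univ.filter (fun m : Fin e => (m : ℕ) < e) = Finset.univ := by
    apply Finset.filter_true_of_mem
    intro m _
    exact m.isLt
  rw [huniv] at hfinal
  exact hfinal
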